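/- Let π : L∞(F) → L∞(G) be regular with π(0)=0 and K(X,Q) := ess inf { π(ξ) : E_Q[ξ|G] ≥_Q E_Q[X|G] }. If Q₁, Q₂ ≪ P and B ∈ G satisfy (dQ₁/dP)·1_B = (dQ₂/dP)·1_B, then K(X, Q₁)·1_B = K(X, Q₂)·1_B for every X ∈ L∞(F). -/

import Mathlib

open MeasureTheory Filter Set

noncomputable section

/-- `X` is a bounded `F`-measurable random variable (an element of `L∞(F)`). -/
def IsBddMeas {Ω : Type*} (F : MeasurableSpace Ω) (X : Ω → ℝ) : Prop :=
  Measurable[F] X ∧ ∃ C : ℝ, ∀ ω, |X ω| ≤ C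

/-- Regularity (REG) of the conditional map `π` with respect to the
sub-σ-algebra `m`: `π (X 1_A + Y 1_{Aᶜ}) = π X 1_A + π Y 1_{Aᶜ}` a.s. -/
def Regular {Ω : Type*} (F m : MeasurableSpace Ω) (μ : @Measure Ω F)
    (π : (Ω → ℝ) → Ω → ℝ) : Prop :=
  ∀ X Y : Ω → ℝ, IsBddMeas F X → IsBddMeas F Y → ∀ A : Set Ω, MeasurableSet[m] A →
    π (A.indicator X + Aᶜ.indicator Y) =ᵐ[μ] A.indicator (π X) + Aᶜ.indicator (π Y)

/-- `I` is an essential infimum (in the `μ`-a.e. pointwise order) of the set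
`S` of random variables. -/
def IsEssInf {Ω : Type*} {F : MeasurableSpace Ω} (μ : @Measure Ω F)
    (S : Set (Ω → ℝ)) (I : Ω → ℝ) : Prop :=
  (∀ f ∈ S, I ≤ᵐ[μ] f) ∧ ∀ g : Ω → ℝ, (∀ f ∈ S, g ≤ᵐ[μ] f) → g ≤ᵐ[μ] I

/-- `I` is an essential supremum (in the `μ`-a.e. pointwise order) of the set
`S` of random variables. -/
def IsEssSup {Ω : Type*} {F : MeasurableSpace Ω} (μ : @Measure Ω F)
    (S : Set (Ω → ℝ)) (I : Ω → ℝ) : Prop :=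
  (∀ f ∈ S, f ≤ᵐ[μ] I) ∧ ∀ g : Ω → ℝ, (∀ f ∈ S, f ≤ᵐ[μ] g) → I ≤ᵐ[μ] g


section Helpers

variable {Ω : Type*} {m : MeasurableSpace Ω} [F : MeasurableSpace Ω]

lemma bdd_integrable {X : Ω → ℝ} (h : IsBddMeas F X) (Q : @Measure Ω F)
    [IsFiniteMeasure Q] : Integrable X Q := by
  obtain ⟨hmeas, C, hC⟩ := h
  exact ⟨hmeas.aestronglyMeasurable,
    HasFiniteIntegral.of_bounded (C := C) (ae_of_all _ fun ω => by simpa using hC ω)⟩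

/-- The conditional expectation only depends on the restriction of the measure,
on a set belonging to the sub-σ-algebra. -/
lemma condexp_restrict_congr (hm : m ≤ F) (Q₁ Q₂ : @Measure Ω F)
    [IsFiniteMeasure Q₁] [IsFiniteMeasure Q₂]
    {B : Set Ω} (hB : MeasurableSet[m] B) (hres : Q₁.restrict B = Q₂.restrict B)
    {f : Ω → ℝ} (hf₁ : Integrable f Q₁) (hf₂ : Integrable f Q₂) :
    Q₁[f|m] =ᵐ[Q₂.restrict B] Q₂[f|m] := by
  have hBF : MeasurableSet B := hm B hB
  have hind : Integrable (B.indicator (Q₁[f|m])) Q₂ := by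
    rw [integrable_indicator_iff hBF]
    rw [IntegrableOn, ← hres]
    exact integrable_condExp.restrict
  have key : B.indicator (Q₁[f|m]) =ᵐ[Q₂] Q₂[B.indicator f|m] := by
    refine ae_eq_condExp_of_forall_setIntegral_eq hm (hf₂.indicator hBF)
      (fun s _ _ => hind.integrableOn) (fun s hs _ => ?_)
      ((stronglyMeasurable_condExp.indicator hB).aestronglyMeasurable)
    have hsF : MeasurableSet s := hm s hs
    rw [setIntegral_indicator hBF, setIntegral_indicator hBF]
    have e1 : ∫ x in s ∩ B, (Q₁[f|m]) x ∂Q₂ = ∫ x in s ∩ B, (Q₁[f|m]) x ∂Q₁ := by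
      rw [← Measure.restrict_restrict hsF, ← Measure.restrict_restrict hsF, hres]
    have e2 : ∫ x in s ∩ B, f x ∂Q₁ = ∫ x in s ∩ B, f x ∂Q₂ := by
      rw [← Measure.restrict_restrict hsF, ← Measure.restrict_restrict hsF, hres]
    rw [e1, setIntegral_condExp hm hf₁ (hs.inter hB), e2]
  have key2 : Q₂[B.indicator f|m] =ᵐ[Q₂] B.indicator (Q₂[f|m]) := condExp_indicator hf₂ hB
  have h3 : B.indicator (Q₁[f|m]) =ᵐ[Q₂.restrict B] B.indicator (Q₂[f|m]) :=
    ae_restrict_of_ae (key.trans key2)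
  filter_upwards [h3, ae_restrict_mem hBF] with ω hω hωB
  simpa [Set.indicator_of_mem hωB] using hω

lemma restrict_eq_of_rnDeriv_eqOn (μ Q₁ Q₂ : @Measure Ω F) [SigmaFinite μ]
    [IsFiniteMeasure Q₁] [IsFiniteMeasure Q₂]
    (hQ₁ : Q₁ ≪ μ) (hQ₂ : Q₂ ≪ μ) {B : Set Ω} (hBF : MeasurableSet B)
    (hdens : ∀ᵐ ω ∂μ, ω ∈ B → Q₁.rnDeriv μ ω = Q₂.rnDeriv μ ω) :
    Q₁.restrict B = Q₂.restrict B := by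
  conv_lhs => rw [← Measure.withDensity_rnDeriv_eq Q₁ μ hQ₁]
  conv_rhs => rw [← Measure.withDensity_rnDeriv_eq Q₂ μ hQ₂]
  rw [restrict_withDensity hBF, restrict_withDensity hBF]
  exact withDensity_congr_ae ((ae_restrict_iff' hBF).2 hdens)

/-- One direction of locality: if the restrictions agree on `B ∈ m`, then
`K₂ ≤ K₁` a.e. on `B`. -/
lemma K_le_on (hm : m ≤ F) (μ : @Measure Ω F) [IsProbabilityMeasure μ]
    (π : (Ω → ℝ) → Ω → ℝ) (hreg : Regular F m μ π)
    (X : Ω → ℝ) (hX : IsBddMeas F X)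
    (Q₁ Q₂ : @Measure Ω F) [IsProbabilityMeasure Q₁] [IsProbabilityMeasure Q₂]
    {B : Set Ω} (hB : MeasurableSet[m] B) (hres : Q₁.restrict B = Q₂.restrict B)
    (K₁ K₂ : Ω → ℝ)
    (hK₁ : IsEssInf μ
      {g | ∃ ξ : Ω → ℝ, IsBddMeas F ξ ∧ (Q₁[X|m] ≤ᵐ[Q₁] Q₁[ξ|m]) ∧ g = π ξ} K₁)
    (hK₂ : IsEssInf μ
      {g | ∃ ξ : Ω → ℝ, IsBddMeas F ξ ∧ (Q₂[X|m] ≤ᵐ[Q₂] Q₂[ξ|m]) ∧ g = π ξ} K₂) :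
    ∀ᵐ ω ∂μ, ω ∈ B → K₂ ω ≤ K₁ ω := by
  have hBF : MeasurableSet B := hm B hB
  obtain ⟨hXmeas, CX, hCX⟩ := id hX
  set g : Ω → ℝ := B.indicator K₂ + Bᶜ.indicator K₁ with hg_def
  have hg : ∀ f ∈ {g | ∃ ξ : Ω → ℝ, IsBddMeas F ξ ∧ (Q₁[X|m] ≤ᵐ[Q₁] Q₁[ξ|m]) ∧ g = π ξ},
      g ≤ᵐ[μ] f := by
    rintro f ⟨ξ, hξ, hadm, rfl⟩
    obtain ⟨hξmeas, Cξ, hCξ⟩ := id hξ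
    set ξ' : Ω → ℝ := B.indicator ξ + Bᶜ.indicator X with hξ'_def
    -- ξ' is bounded measurable
    have hξ'bdd : IsBddMeas F ξ' := by
      refine ⟨(hξmeas.indicator hBF).add (hXmeas.indicator hBF.compl), max Cξ CX, fun ω => ?_⟩
      by_cases hω : ω ∈ B
      · simpa [ξ', Set.indicator_of_mem hω, Set.indicator_of_notMem (notMem_compl_iff.2 hω)]
          using le_trans (hCξ ω) (le_max_left _ _)
      · simpa [ξ', Set.indicator_of_notMem hω,
          Set.indicator_of_mem (mem_compl hω)] using le_trans (hCX ω) (le_max_right _ _)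
    -- integrability facts
    have hXQ₂ : Integrable X Q₂ := bdd_integrable hX Q₂
    have hXQ₁ : Integrable X Q₁ := bdd_integrable hX Q₁
    have hξQ₂ : Integrable ξ Q₂ := bdd_integrable hξ Q₂
    have hξQ₁ : Integrable ξ Q₁ := bdd_integrable hξ Q₁
    -- conditional expectation of ξ' under Q₂
    have hcond : Q₂[ξ'|m] =ᵐ[Q₂] B.indicator (Q₂[ξ|m]) + Bᶜ.indicator (Q₂[X|m]) :=
      (condExp_add (hξQ₂.indicator hBF) (hXQ₂.indicator hBF.compl) m).trans
        ((condExp_indicator hξQ₂ hB).add (condExp_indicator hXQ₂ hB.compl))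
    -- on B, the conditional expectations under Q₁ and Q₂ agree
    have honB : ∀ᵐ ω ∂Q₂, ω ∈ B → (Q₂[X|m]) ω ≤ (Q₂[ξ|m]) ω := by
      have h1 : Q₁[X|m] =ᵐ[Q₂.restrict B] Q₂[X|m] :=
        condexp_restrict_congr hm Q₁ Q₂ hB hres hXQ₁ hXQ₂
      have h2 : Q₁[ξ|m] =ᵐ[Q₂.restrict B] Q₂[ξ|m] :=
        condexp_restrict_congr hm Q₁ Q₂ hB hres hξQ₁ hξQ₂
      have h0 : Q₁[X|m] ≤ᵐ[Q₂.restrict B] Q₁[ξ|m] := hres ▸ ae_restrict_of_ae hadm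
      refine (ae_restrict_iff' hBF).1 ?_
      filter_upwards [h0, h1, h2] with ω a b c
      rw [← b, ← c]; exact a
    -- ξ' is admissible for Q₂
    have hadm' : Q₂[X|m] ≤ᵐ[Q₂] Q₂[ξ'|m] := by
      filter_upwards [hcond, honB] with ω h1 h2
      rw [h1]
      by_cases hω : ω ∈ B
      · simpa [Set.indicator_of_mem hω, Set.indicator_of_notMem (notMem_compl_iff.2 hω)]
          using h2 hω
      · simp [Set.indicator_of_notMem hω, Set.indicator_of_mem (mem_compl hω)]
    have h1 : K₂ ≤ᵐ[μ] π ξ' := hK₂.1 _ ⟨ξ', hξ'bdd, hadm', rfl⟩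
    have h2 : π ξ' =ᵐ[μ] B.indicator (π ξ) + Bᶜ.indicator (π X) := hreg ξ X hξ hX B hB
    have h3 : K₁ ≤ᵐ[μ] π ξ := hK₁.1 _ ⟨ξ, hξ, hadm, rfl⟩
    filter_upwards [h1, h2, h3] with ω hω1 hω2 hω3
    by_cases hω : ω ∈ B
    · have : π ξ' ω = π ξ ω := by
        rw [hω2]
        simp [Set.indicator_of_mem hω, Set.indicator_of_notMem (notMem_compl_iff.2 hω)]
      simpa [g, Set.indicator_of_mem hω,
        Set.indicator_of_notMem (notMem_compl_iff.2 hω), ← this] using hω1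
    · simpa [g, Set.indicator_of_notMem hω,
        Set.indicator_of_mem (mem_compl hω)] using hω3
  have hgK : g ≤ᵐ[μ] K₁ := hK₁.2 g hg
  filter_upwards [hgK] with ω hω hωB
  simpa [g, Set.indicator_of_mem hωB,
    Set.indicator_of_notMem (notMem_compl_iff.2 hωB)] using hω

end Helpers

/-- Locality of `K(X, ·)` in the measure: if the densities `dQ₁/dP` and
`dQ₂/dP` agree on `B ∈ G`, then `K(X,Q₁)·1_B = K(X,Q₂)·1_B`. -/
theorem K_locality
    {Ω : Type*} [F : MeasurableSpace Ω] (μ : Measure Ω) [IsProbabilityMeasure μ]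
    (m : MeasurableSpace Ω) (hm : m ≤ F)
    (π : (Ω → ℝ) → Ω → ℝ) (hreg : Regular F m μ π)
    (hπ0 : π 0 =ᵐ[μ] 0)
    (X : Ω → ℝ) (hX : IsBddMeas F X)
    (Q₁ Q₂ : @Measure Ω F) [IsProbabilityMeasure Q₁] [IsProbabilityMeasure Q₂]
    (hQ₁ : Q₁ ≪ μ) (hQ₂ : Q₂ ≪ μ)
    (B : Set Ω) (hB : MeasurableSet[m] B)
    (hdens : ∀ᵐ ω ∂μ, ω ∈ B → Q₁.rnDeriv μ ω = Q₂.rnDeriv μ ω)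
    (K₁ K₂ : Ω → ℝ)
    (hK₁ : IsEssInf μ
      {g | ∃ ξ : Ω → ℝ, IsBddMeas F ξ ∧ (Q₁[X|m] ≤ᵐ[Q₁] Q₁[ξ|m]) ∧ g = π ξ} K₁)
    (hK₂ : IsEssInf μ
      {g | ∃ ξ : Ω → ℝ, IsBddMeas F ξ ∧ (Q₂[X|m] ≤ᵐ[Q₂] Q₂[ξ|m]) ∧ g = π ξ} K₂) :
    ∀ᵐ ω ∂μ, ω ∈ B → K₁ ω = K₂ ω := by
  have hBF : MeasurableSet[F] B := hm B hB
  have hres : Q₁.restrict B = Q₂.restrict B :=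
    restrict_eq_of_rnDeriv_eqOn (F := F) μ Q₁ Q₂ hQ₁ hQ₂ hBF hdens
  have hdens' : ∀ᵐ ω ∂μ, ω ∈ B → Q₂.rnDeriv μ ω = Q₁.rnDeriv μ ω := by
    filter_upwards [hdens] with ω h hω using (h hω).symm
  have d1 := K_le_on (F := F) hm μ π hreg X hX Q₁ Q₂ hB hres K₁ K₂ hK₁ hK₂
  have d2 := K_le_on (F := F) hm μ π hreg X hX Q₂ Q₁ hB hres.symm K₂ K₁ hK₂ hK₁
  filter_upwards [d1, d2] with ω h1 h2 hω
  exact le_antisymm (h2 hω) (h1 hω)
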